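/- Let f ∈ L^∞(ℝ) be nonnegative and nonincreasing with bilateral-Laplace abscissa λ₀(f) > 0, and let g ∈ L^∞(ℝ) ∩ L¹(ℝ) be nonnegative with λ₀(g) > 0. Then the abscissa of convergence of the product f · (g * f) satisfies λ₀(f·(g*f)) ≥ λ₀(f) + min{λ₀(g), λ₀(f)}. -/

import Mathlib

open MeasureTheory

/-- The abscissa of convergence of the bilateral Laplace transform of `h`. -/
noncomputable def absc (h : ℝ → ℝ) : ENNReal :=
  ⨆ l ∈ {l : ℝ | 0 < l ∧ Integrable (fun s => h s * Real.exp (l * s))}, ENNReal.ofReal l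

open Real Set

lemma my_intOn_exp_Iic {b : ℝ} (hb : 0 < b) (c : ℝ) :
    IntegrableOn (fun s => Real.exp (b * s)) (Iic c) := by
  have h1 : IntegrableOn (fun t => Real.exp (-b * t)) (Ioi (-c)) :=
    exp_neg_integrableOn_Ioi _ hb
  have h2 : Integrable ((Ioi (-c)).indicator fun t => Real.exp (-b * t)) :=
    (integrable_indicator_iff measurableSet_Ioi).2 h1
  have h3 : Integrable (fun s => ((Ioi (-c)).indicator fun t => Real.exp (-b * t)) (-s)) :=
    h2.comp_neg
  have h4 : (fun s => ((Ioi (-c)).indicator fun t => Real.exp (-b * t)) (-s))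
      = (Iio c).indicator fun s => Real.exp (b * s) := by
    funext s
    simp only [Set.indicator_apply, Set.mem_Ioi, Set.mem_Iio, neg_lt_neg_iff, neg_mul_neg]
  rw [h4] at h3
  have h5 : IntegrableOn (fun s => Real.exp (b * s)) (Iio c) :=
    (integrable_indicator_iff measurableSet_Iio).1 h3
  exact h5.congr_set_ae Iio_ae_eq_Iic.symm

lemma my_decay {f : ℝ → ℝ} {a : ℝ} (hf_nn : ∀ s, 0 ≤ f s) (hf_mono : Antitone f)
    (hint : Integrable (fun s => f s * Real.exp (a * s))) (ha : 0 < a) :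
    ∃ C, 0 ≤ C ∧ ∀ s, f s * Real.exp (a * s) ≤ C := by
  set I := ∫ s, f s * Real.exp (a * s) with hI_def
  have hI : 0 ≤ I := integral_nonneg fun s => mul_nonneg (hf_nn s) (Real.exp_pos _).le
  refine ⟨I * Real.exp a, mul_nonneg hI (Real.exp_pos _).le, fun s => ?_⟩
  have key : f s * Real.exp (a * (s - 1)) ≤ I := by
    have h1 : ∫ _τ in Icc (s-1) s, f s * Real.exp (a * (s-1))
        ≤ ∫ τ in Icc (s-1) s, f τ * Real.exp (a * τ) := by
      refine setIntegral_mono_on (integrableOn_const ?_) hint.integrableOn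
        measurableSet_Icc ?_
      · rw [Real.volume_Icc]; exact ENNReal.ofReal_ne_top
      · intro τ hτ
        exact mul_le_mul (hf_mono hτ.2)
          (Real.exp_le_exp.2 (mul_le_mul_of_nonneg_left hτ.1 ha.le))
          (Real.exp_pos _).le (hf_nn τ)
    have h2 : ∫ τ in Icc (s-1) s, f τ * Real.exp (a * τ) ≤ I :=
      setIntegral_le_integral hint
        (Filter.Eventually.of_forall fun τ => mul_nonneg (hf_nn τ) (Real.exp_pos _).le)
    have h3 : ∫ _τ in Icc (s-1) s, f s * Real.exp (a * (s-1))
        = f s * Real.exp (a * (s-1)) := by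
      rw [setIntegral_const, measureReal_def, Real.volume_Icc]
      norm_num
    linarith
  have he : Real.exp (a * s) = Real.exp (a * (s-1)) * Real.exp a := by
    rw [← Real.exp_add]; congr 1; ring
  calc f s * Real.exp (a * s) = (f s * Real.exp (a * (s-1))) * Real.exp a := by
        rw [he]; ring
    _ ≤ I * Real.exp a := mul_le_mul_of_nonneg_right key (Real.exp_pos _).le

lemma my_dc {h : ℝ → ℝ} {M l l' : ℝ} (h_nn : ∀ s, 0 ≤ h s) (h_bdd : ∀ s, h s ≤ M)
    (hl' : 0 < l') (hle : l' ≤ l)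
    (hint : Integrable (fun s => h s * Real.exp (l * s))) :
    Integrable (fun s => h s * Real.exp (l' * s)) := by
  have hmeas : AEStronglyMeasurable (fun s => h s * Real.exp (l' * s)) volume := by
    have h1 : AEStronglyMeasurable (fun s : ℝ => Real.exp ((l' - l) * s)) volume :=
      (Real.continuous_exp.comp (continuous_const.mul continuous_id)).aestronglyMeasurable
    refine (hint.aestronglyMeasurable.mul h1).congr ?_
    filter_upwards with s
    simp only [Pi.mul_apply]
    rw [mul_assoc, ← Real.exp_add]
    congr 1
    ring
  have hbd_int : Integrable (fun s => h s * Real.exp (l * s)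
      + (Iic (0:ℝ)).indicator (fun s => M * Real.exp (l' * s)) s) :=
    hint.add ((integrable_indicator_iff measurableSet_Iic).2 ((my_intOn_exp_Iic hl' 0).const_mul M))
  refine hbd_int.mono' hmeas ?_
  filter_upwards with s
  rw [Real.norm_eq_abs, abs_of_nonneg (mul_nonneg (h_nn s) (Real.exp_pos _).le)]
  by_cases hs : s ≤ 0
  · have h1 : h s * Real.exp (l' * s) ≤ M * Real.exp (l' * s) :=
      mul_le_mul_of_nonneg_right (h_bdd s) (Real.exp_pos _).le
    rw [Set.indicator_of_mem (by simpa using hs)]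
    nlinarith [mul_nonneg (h_nn s) (Real.exp_pos (l*s)).le]
  · push_neg at hs
    have h1 : Real.exp (l' * s) ≤ Real.exp (l * s) :=
      Real.exp_le_exp.2 (mul_le_mul_of_nonneg_right hle hs.le)
    rw [Set.indicator_of_notMem (by simpa using hs)]
    nlinarith [h_nn s]

lemma my_key {f g : ℝ → ℝ} {a b : ℝ}
    (hf_nn : ∀ s, 0 ≤ f s) (hf_mono : Antitone f)
    (hg_nn : ∀ s, 0 ≤ g s) (hg_int : Integrable g)
    (_ha : 0 < a) (hb : 0 < b)
    (hfa : Integrable (fun s => f s * Real.exp (a * s)))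
    (hfb : Integrable (fun s => f s * Real.exp (b * s)))
    (hgb : Integrable (fun s => g s * Real.exp (b * s))) :
    Integrable (fun s => (f s * ∫ τ, g τ * f (s - τ)) * Real.exp ((a + b) * s)) := by
  obtain ⟨C, hC0, hC⟩ := my_decay hf_nn hf_mono hfb hb
  have hfptw : ∀ u, f u ≤ C * Real.exp (-(b * u)) := by
    intro u
    have h1 : f u * Real.exp (b*u) ≤ C := hC u
    have h2 : f u = f u * Real.exp (b*u) * Real.exp (-(b*u)) := by
      rw [mul_assoc, ← Real.exp_add]; simp
    rw [h2]
    exact mul_le_mul_of_nonneg_right h1 (Real.exp_pos _).le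
  have hfmeas : Measurable f := hf_mono.measurable
  set Ig := ∫ τ, g τ * Real.exp (b * τ) with hIg_def
  have hIg : 0 ≤ Ig := integral_nonneg fun τ => mul_nonneg (hg_nn τ) (Real.exp_pos _).le
  have hinner : ∀ s, (∫ τ, g τ * f (s - τ)) ≤ C * Ig * Real.exp (-(b * s)) := by
    intro s
    have hle : ∀ τ, g τ * f (s - τ) ≤ (C * Real.exp (-(b*s))) * (g τ * Real.exp (b * τ)) := by
      intro τ
      have h1 : f (s - τ) ≤ C * Real.exp (-(b * (s - τ))) := hfptw _
      have h2 : Real.exp (-(b * (s - τ))) = Real.exp (-(b*s)) * Real.exp (b*τ) := by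
        rw [← Real.exp_add]; congr 1; ring
      calc g τ * f (s - τ) ≤ g τ * (C * Real.exp (-(b * (s-τ)))) :=
            mul_le_mul_of_nonneg_left h1 (hg_nn τ)
        _ = (C * Real.exp (-(b*s))) * (g τ * Real.exp (b * τ)) := by rw [h2]; ring
    have hmono := integral_mono_of_nonneg
      (Filter.Eventually.of_forall fun τ => mul_nonneg (hg_nn τ) (hf_nn _))
      (hgb.const_mul (C * Real.exp (-(b*s)))) (Filter.Eventually.of_forall hle)
    calc (∫ τ, g τ * f (s - τ))
        ≤ ∫ τ, (C * Real.exp (-(b*s))) * (g τ * Real.exp (b*τ)) := hmono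
      _ = (C * Real.exp (-(b*s))) * Ig := integral_const_mul _ _
      _ = C * Ig * Real.exp (-(b*s)) := by ring
  have hconv_meas : AEStronglyMeasurable (fun s => ∫ τ, g τ * f (s - τ)) volume := by
    have h1 : AEStronglyMeasurable (fun p : ℝ × ℝ => g p.2 * f (p.1 - p.2))
        ((volume : Measure ℝ).prod volume) :=
      hg_int.aestronglyMeasurable.comp_snd.mul
        ((hfmeas.comp (measurable_fst.sub measurable_snd)).aestronglyMeasurable)
    exact h1.integral_prod_right'
  have hmeas : AEStronglyMeasurable
      (fun s => (f s * ∫ τ, g τ * f (s - τ)) * Real.exp ((a+b) * s)) volume :=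
    (hfmeas.aestronglyMeasurable.mul hconv_meas).mul
      (Real.continuous_exp.comp (continuous_const.mul continuous_id)).aestronglyMeasurable
  have hbd : Integrable (fun s => (C * Ig) * (f s * Real.exp (a * s))) :=
    hfa.const_mul (C * Ig)
  refine hbd.mono' hmeas ?_
  filter_upwards with s
  have hinner_nn : 0 ≤ ∫ τ, g τ * f (s - τ) :=
    integral_nonneg fun τ => mul_nonneg (hg_nn τ) (hf_nn _)
  rw [Real.norm_eq_abs,
    abs_of_nonneg (mul_nonneg (mul_nonneg (hf_nn s) hinner_nn) (Real.exp_pos _).le)]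
  have h2 := hinner s
  have he : Real.exp (-(b*s)) * Real.exp ((a+b)*s) = Real.exp (a*s) := by
    rw [← Real.exp_add]; congr 1; ring
  calc (f s * (∫ τ, g τ * f (s-τ))) * Real.exp ((a+b)*s)
      ≤ (f s * (C * Ig * Real.exp (-(b*s)))) * Real.exp ((a+b)*s) :=
        mul_le_mul_of_nonneg_right (mul_le_mul_of_nonneg_left h2 (hf_nn s)) (Real.exp_pos _).le
    _ = (C*Ig) * (f s * (Real.exp (-(b*s)) * Real.exp ((a+b)*s))) := by ring
    _ = (C*Ig) * (f s * Real.exp (a*s)) := by rw [he]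

theorem stmt_10 (f g : ℝ → ℝ)
    (hf_nn : ∀ s, 0 ≤ f s) (hf_mono : Antitone f) (hf_bdd : ∃ M, ∀ s, f s ≤ M)
    (hg_nn : ∀ s, 0 ≤ g s) (hg_bdd : ∃ M, ∀ s, g s ≤ M) (hg_int : Integrable g)
    (hf_abs : 0 < absc f) (hg_abs : 0 < absc g) :
    absc f + min (absc g) (absc f) ≤ absc (fun s => f s * ∫ τ, g τ * f (s - τ)) := by
  obtain ⟨Mf, hMf⟩ := hf_bdd
  obtain ⟨Mg, hMg⟩ := hg_bdd
  set Sf : Set ℝ := {l | 0 < l ∧ Integrable fun s => f s * Real.exp (l * s)} with hSf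
  set Sgf : Set ℝ := {l | (0 < l ∧ Integrable fun s => g s * Real.exp (l * s))
      ∧ Integrable fun s => f s * Real.exp (l * s)} with hSgf
  set B' : ENNReal := ⨆ l ∈ Sgf, ENNReal.ofReal l with hB'
  -- step 1 : min ≤ B'
  have step1 : min (absc g) (absc f) ≤ B' := by
    refine le_of_forall_lt fun c hc => ?_
    have hcg : c < absc g := hc.trans_le (min_le_left _ _)
    have hcf : c < absc f := hc.trans_le (min_le_right _ _)
    obtain ⟨lg, ⟨hlg_pos, hlg_int⟩, hclg⟩ :
        ∃ l, (0 < l ∧ Integrable fun s => g s * Real.exp (l * s)) ∧ c < ENNReal.ofReal l := by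
      simpa [absc, lt_iSup_iff] using hcg
    obtain ⟨lf, ⟨hlf_pos, hlf_int⟩, hclf⟩ :
        ∃ l, (0 < l ∧ Integrable fun s => f s * Real.exp (l * s)) ∧ c < ENNReal.ofReal l := by
      simpa [absc, lt_iSup_iff] using hcf
    set l := min lg lf with hl
    have hl_pos : 0 < l := lt_min hlg_pos hlf_pos
    have hmem : l ∈ Sgf :=
      ⟨⟨hl_pos, my_dc hg_nn hMg hl_pos (min_le_left _ _) hlg_int⟩,
       my_dc hf_nn hMf hl_pos (min_le_right _ _) hlf_int⟩
    have hcl : c < ENNReal.ofReal l := by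
      rcases min_cases lg lf with ⟨h1, _⟩ | ⟨h1, _⟩ <;> rw [hl, h1]
      exacts [hclg, hclf]
    exact hcl.trans_le (le_biSup _ hmem)
  have habs_f : absc f = ⨆ l ∈ Sf, ENNReal.ofReal l := rfl
  -- nonemptiness
  obtain ⟨lf0, hlf0, _⟩ :
      ∃ l, (0 < l ∧ Integrable fun s => f s * Real.exp (l * s)) ∧ 0 < ENNReal.ofReal l := by
    simpa [absc, lt_iSup_iff] using hf_abs
  have hB'_pos : 0 < B' :=
    lt_of_lt_of_le (lt_min hg_abs hf_abs) step1
  obtain ⟨l0, hl0, _⟩ : ∃ l, l ∈ Sgf ∧ 0 < ENNReal.ofReal l := by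
    simpa [hB', lt_iSup_iff] using hB'_pos
  haveI : Nonempty Sf := ⟨⟨lf0, hlf0⟩⟩
  haveI : Nonempty Sgf := ⟨⟨l0, hl0⟩⟩
  -- step 2 : absc f + B' ≤ absc h
  have step2 : absc f + B' ≤ absc (fun s => f s * ∫ τ, g τ * f (s - τ)) := by
    have hrw : absc f + B'
        = ⨆ (x : Sf) (y : Sgf), (ENNReal.ofReal x.1 + ENNReal.ofReal y.1) := by
      rw [habs_f, hB', iSup_subtype', iSup_subtype', ENNReal.iSup_add]
      congr 1
      funext x
      rw [ENNReal.add_iSup]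
    rw [hrw]
    refine iSup_le fun x => iSup_le fun y => ?_
    obtain ⟨a, ha_pos, ha_int⟩ := x
    obtain ⟨b, ⟨⟨hb_pos, hb_gint⟩, hb_fint⟩⟩ := y
    rw [← ENNReal.ofReal_add ha_pos.le hb_pos.le]
    have hmem : (0 < a + b ∧ Integrable fun s =>
        (fun s => f s * ∫ τ, g τ * f (s - τ)) s * Real.exp ((a+b) * s)) :=
      ⟨add_pos ha_pos hb_pos,
        my_key hf_nn hf_mono hg_nn hg_int ha_pos hb_pos ha_int hb_fint hb_gint⟩
    exact le_biSup (fun l => ENNReal.ofReal l) hmem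
  calc absc f + min (absc g) (absc f) ≤ absc f + B' := add_le_add_right step1 _
    _ ≤ _ := step2
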